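/- arXiv:1611.03454 — 4 statements merged into one kernel-verified Lean document; each statement's English description precedes it below -/
import Mathlib

section
/- Let G be a finite simple graph, let H be an induced subgraph of G such that every vertex of H has at most one neighbor in G outside of H, and no two distinct vertices of H have a common neighbor in G lying outside of H. Then the subgraph of G^{(2)} induced by the vertices of H equals H^{(2)}. -/
/-- The neighboring graph `G⁽²⁾`: two distinct vertices are adjacent iff they
have a common neighbor in `G`. -/
def SimpleGraph.neighboringGraph {V : Type*} (G : SimpleGraph V) : SimpleGraph V where
  Adj u v := u ≠ v ∧ ∃ w, G.Adj u w ∧ G.Adj v w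
  symm := by
    constructor
    intro u v h
    exact ⟨h.1.symm, h.2.imp fun w hw => ⟨hw.2, hw.1⟩⟩
  loopless := by
    constructor
    intro u h
    exact h.1 rfl

/-- If `H = G[S]` is an induced subgraph such that every vertex of `H` has at
most one neighbor of `G` outside `S`, and no two distinct vertices of `H` have
a common neighbor of `G` outside `S`, then the subgraph of `G⁽²⁾` induced by
`S` equals `H⁽²⁾`. -/
theorem induce_neighboringGraph_eq {V : Type*} (G : SimpleGraph V) (S : Set V)
    (hone : ∀ v ∈ S, {w | w ∉ S ∧ G.Adj v w}.Subsingleton)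
    (hnocommon : ∀ u ∈ S, ∀ v ∈ S, u ≠ v →
      ¬ ∃ w, w ∉ S ∧ G.Adj u w ∧ G.Adj v w) :
    G.neighboringGraph.induce S = (G.induce S).neighboringGraph := by
  ext ⟨u, hu⟩ ⟨v, hv⟩
  simp only [SimpleGraph.comap_adj, Function.Embedding.coe_subtype,
    SimpleGraph.neighboringGraph]
  constructor
  · rintro ⟨hne, w, hw1, hw2⟩
    refine ⟨fun h => hne (congrArg Subtype.val h), ?_⟩
    by_cases hwS : w ∈ S
    · exact ⟨⟨w, hwS⟩, hw1, hw2⟩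
    · exact absurd ⟨w, hwS, hw1, hw2⟩
        (hnocommon u hu v hv hne)
  · rintro ⟨hne, ⟨w, hwS⟩, hw1, hw2⟩
    exact ⟨fun h => hne (Subtype.ext h), w, hw1, hw2⟩
end

section
/- Let G be a finite simple graph with maximum degree at most 3 and let u, v be adjacent vertices both of degree 2 in G. Let L be a list assignment with |L(w)| ≥ 5 for all w. If G − {u,v} admits an injective L-coloring, then G admits an injective L-coloring. -/
/-- Let `G` have maximum degree at most 3 and let `u, v` be adjacent vertices
both of degree 2.  If `G − {u,v}` admits an injective `L`-coloring for a list
assignment with lists of size at least 5, then `G` admits an injective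
`L`-coloring. -/
theorem injective_coloring_extends_adjacent_deg_two {V : Type*} [Fintype V]
    (G : SimpleGraph V) [DecidableRel G.Adj]
    (hdeg : ∀ w, G.degree w ≤ 3)
    (u v : V) (huv : G.Adj u v) (hu : G.degree u = 2) (hv : G.degree v = 2)
    (L : V → Finset ℕ) (hL : ∀ w, 5 ≤ (L w).card)
    (hcol : ∃ φ : V → ℕ,
      (∀ w, w ≠ u → w ≠ v → φ w ∈ L w) ∧
      (∀ a b : V, a ≠ u → a ≠ v → b ≠ u → b ≠ v → a ≠ b →
        (∃ w, w ≠ u ∧ w ≠ v ∧ G.Adj a w ∧ G.Adj b w) → φ a ≠ φ b)) :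
    ∃ ψ : V → ℕ, (∀ w, ψ w ∈ L w) ∧
      ∀ a b : V, a ≠ b → (∃ w, G.Adj a w ∧ G.Adj b w) → ψ a ≠ ψ b := by
  classical
  obtain ⟨φ, hmem, hinj⟩ := hcol
  have hne : u ≠ v := G.ne_of_adj huv
  set S : V → Finset V := fun w => (G.neighborFinset w) \ {u, v} with hS
  set F : V → Finset ℕ := fun z => ((G.neighborFinset z).biUnion S).image φ with hF
  have hkey : ∀ z a : V, a ≠ u → a ≠ v → (∃ w, G.Adj z w ∧ G.Adj a w) → φ a ∈ F z := by
    rintro z a hau hav ⟨w, hzw, haw⟩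
    refine Finset.mem_image_of_mem φ (Finset.mem_biUnion.2 ⟨w, ?_, ?_⟩)
    · simpa using hzw
    · simp [hS, haw.symm, hau, hav]
  have herase : ∀ z w : V, G.Adj z w → ((G.neighborFinset w).erase z).card = G.degree w - 1 := by
    intro z w h
    rw [Finset.card_erase_of_mem (by simpa using h.symm),
      SimpleGraph.card_neighborFinset_eq_degree]
  have hSsub : ∀ z w : V, (z = u ∨ z = v) → S w ⊆ (G.neighborFinset w).erase z := by
    intro z w hz x hx
    simp only [hS, Finset.mem_sdiff, Finset.mem_insert, Finset.mem_singleton] at hx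
    refine Finset.mem_erase.2 ⟨fun h => ?_, hx.1⟩
    rcases hz with rfl | rfl
    · exact hx.2 (Or.inl h)
    · exact hx.2 (Or.inr h)
  have hSu : (S u).card ≤ 1 := by
    have := Finset.card_le_card (hSsub v u (Or.inr rfl))
    rw [herase v u huv.symm, hu] at this
    omega
  have hSv : (S v).card ≤ 1 := by
    have := Finset.card_le_card (hSsub u v (Or.inl rfl))
    rw [herase u v huv, hv] at this
    omega
  have hSgen : ∀ z w : V, (z = u ∨ z = v) → G.Adj z w → (S w).card ≤ 2 := by
    intro z w hz h
    have := Finset.card_le_card (hSsub z w hz)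
    rw [herase z w h] at this
    have := hdeg w
    omega
  -- card of the forbidden sets
  have hFcard : ∀ z o : V, (z = u ∧ o = v) ∨ (z = v ∧ o = u) → (F z).card ≤ 3 := by
    rintro z o hzo
    have hoz : G.Adj z o := by rcases hzo with ⟨rfl, rfl⟩ | ⟨rfl, rfl⟩; exact huv; exact huv.symm
    have ho : o ∈ G.neighborFinset z := by simpa using hoz
    have hSo : (S o).card ≤ 1 := by
      rcases hzo with ⟨rfl, rfl⟩ | ⟨rfl, rfl⟩; exact hSv; exact hSu
    have hdz : G.degree z = 2 := by rcases hzo with ⟨rfl, rfl⟩ | ⟨rfl, rfl⟩; exact hu; exact hv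
    calc (F z).card ≤ ((G.neighborFinset z).biUnion S).card := Finset.card_image_le
      _ ≤ ∑ w ∈ G.neighborFinset z, (S w).card := Finset.card_biUnion_le
      _ = (S o).card + ∑ w ∈ (G.neighborFinset z).erase o, (S w).card :=
          (Finset.add_sum_erase _ _ ho).symm
      _ ≤ 1 + 2 := by
          gcongr
          have hb : ∀ w ∈ (G.neighborFinset z).erase o, (S w).card ≤ 2 := by
            intro w hw
            have hw' : G.Adj z w := by
              have := Finset.mem_of_mem_erase hw
              simpa using this
            refine hSgen z w ?_ hw'
            rcases hzo with ⟨rfl, rfl⟩ | ⟨rfl, rfl⟩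
            · exact Or.inl rfl
            · exact Or.inr rfl
          calc ∑ w ∈ (G.neighborFinset z).erase o, (S w).card
              ≤ ((G.neighborFinset z).erase o).card * 2 := by
                simpa using Finset.sum_le_card_nsmul _ _ 2 hb
            _ ≤ 2 := by
                rw [herase o z hoz.symm, hdz]
      _ = 3 := by norm_num
  -- choose colors
  have hpick : ∀ (z : V) (T : Finset ℕ), T.card ≤ 4 → (L z \ T).Nonempty := by
    intro z T hT
    rw [← Finset.card_pos]
    have h1 := Finset.card_le_card_sdiff_add_card (s := L z) (t := T)
    have h2 := hL z
    omega
  obtain ⟨cv, hcv⟩ := hpick v (F v) (le_trans (hFcard v u (Or.inr ⟨rfl, rfl⟩)) (by norm_num))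
  rw [Finset.mem_sdiff] at hcv
  obtain ⟨cu, hcu⟩ := hpick u (insert cv (F u)) (by
    have := hFcard u v (Or.inl ⟨rfl, rfl⟩)
    have := Finset.card_insert_le cv (F u)
    omega)
  rw [Finset.mem_sdiff, Finset.mem_insert] at hcu
  push_neg at hcu
  set ψ : V → ℕ := fun w => if w = u then cu else if w = v then cv else φ w with hψ
  have hψu : ψ u = cu := by simp [hψ]
  have hψv : ψ v = cv := by simp [hψ, hne.symm]
  have hψo : ∀ w, w ≠ u → w ≠ v → ψ w = φ w := by
    intro w h1 h2; simp [hψ, h1, h2]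
  refine ⟨ψ, ?_, ?_⟩
  · intro w
    by_cases h1 : w = u
    · rw [h1, hψu]; exact hcu.1
    by_cases h2 : w = v
    · rw [h2, hψv]; exact hcv.1
    · rw [hψo w h1 h2]; exact hmem w h1 h2
  · rintro a b hab ⟨w, haw, hbw⟩
    by_cases ha1 : a = u
    · by_cases hb1 : b = v
      · rw [ha1, hb1, hψu, hψv]; exact hcu.2.1
      · have hb2 : b ≠ u := fun h => hab (ha1.trans h.symm)
        have hbF : φ b ∈ F u := hkey u b hb2 hb1 ⟨w, ha1 ▸ haw, hbw⟩
        rw [ha1, hψu, hψo b hb2 hb1]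
        exact fun h => hcu.2.2 (h ▸ hbF)
    by_cases ha2 : a = v
    · by_cases hb1 : b = u
      · rw [ha2, hb1, hψu, hψv]; exact (Ne.symm hcu.2.1)
      · have hb2 : b ≠ v := fun h => hab (ha2.trans h.symm)
        have hbF : φ b ∈ F v := hkey v b hb1 hb2 ⟨w, ha2 ▸ haw, hbw⟩
        rw [ha2, hψv, hψo b hb1 hb2]
        exact fun h => hcv.2 (h ▸ hbF)
    by_cases hb1 : b = u
    · have haF : φ a ∈ F u := hkey u a ha1 ha2 ⟨w, hb1 ▸ hbw, haw⟩
      rw [hb1, hψu, hψo a ha1 ha2]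
      exact fun h => hcu.2.2 (h.symm ▸ haF)
    by_cases hb2 : b = v
    · have haF : φ a ∈ F v := hkey v a ha1 ha2 ⟨w, hb2 ▸ hbw, haw⟩
      rw [hb2, hψv, hψo a ha1 ha2]
      exact fun h => hcv.2 (h.symm ▸ haF)
    · rw [hψo a ha1 ha2, hψo b hb1 hb2]
      by_cases hw1 : w = u
      · exfalso
        have hcard : ((G.neighborFinset u).erase v).card ≤ 1 := by
          rw [herase v u huv.symm, hu]
        have haE : a ∈ (G.neighborFinset u).erase v :=
          Finset.mem_erase.2 ⟨ha2, by simpa using (hw1 ▸ haw).symm⟩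
        have hbE : b ∈ (G.neighborFinset u).erase v :=
          Finset.mem_erase.2 ⟨hb2, by simpa using (hw1 ▸ hbw).symm⟩
        exact hab (Finset.card_le_one.mp hcard a haE b hbE)
      by_cases hw2 : w = v
      · exfalso
        have hcard : ((G.neighborFinset v).erase u).card ≤ 1 := by
          rw [herase u v huv, hv]
        have haE : a ∈ (G.neighborFinset v).erase u :=
          Finset.mem_erase.2 ⟨ha1, by simpa using (hw2 ▸ haw).symm⟩
        have hbE : b ∈ (G.neighborFinset v).erase u :=
          Finset.mem_erase.2 ⟨hb1, by simpa using (hw2 ▸ hbw).symm⟩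
        exact hab (Finset.card_le_one.mp hcard a haE b hbE)
      · exact hinj a b ha1 ha2 hb1 hb2 hab ⟨w, hw1, hw2, haw, hbw⟩
end

section
/- Let G be a finite simple plane graph with girth at least 6 in which any two distinct vertices of degree 2 are at distance at least 4 from each other. Then every face f of G satisfies ℓ(f) ≥ 4·|I(f)| + 2·|N(f)|, where I(f) is the set of degree-2 vertices incident to f and N(f) is the set of degree-2 vertices adjacent to a vertex incident to f but not themselves incident to f. -/
open Finset

private lemma aux_fst {V : Type*} {G : SimpleGraph V} {x z : V} {w : G.Walk x x}
    (hlen : 0 < w.length) (hy : z ∈ w.support) : ∃ d ∈ w.darts, d.toProd.1 = z := by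
  have hmap := w.map_fst_darts
  suffices h : z ∈ w.support.dropLast by
    rw [← hmap] at h
    obtain ⟨d, hd, hdy⟩ := List.mem_map.mp h
    exact ⟨d, hd, hdy⟩
  have htail : w.support.tail ≠ [] := by
    rw [← List.length_pos_iff_ne_nil, List.length_tail, w.length_support]
    omega
  have hsupp : w.support = x :: w.support.tail := w.support_eq_cons
  rw [hsupp] at hy ⊢
  rw [List.dropLast_cons_of_ne_nil htail]
  rcases List.mem_cons.mp hy with h | h
  · exact List.mem_cons.mpr (Or.inl h)
  · have hlast : w.support.tail.getLast htail = x := by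
      rw [List.getLast_tail]
      exact w.getLast_support
    have hsplit := List.dropLast_append_getLast htail
    rw [← hsplit] at h
    rcases List.mem_append.mp h with h' | h'
    · exact List.mem_cons_of_mem _ h'
    · rw [List.mem_singleton] at h'
      rw [h', hlast]
      exact List.mem_cons_self

private lemma aux_snd {V : Type*} {G : SimpleGraph V} {x z : V} {w : G.Walk x x}
    (hlen : 0 < w.length) (hy : z ∈ w.support) : ∃ d ∈ w.darts, d.toProd.2 = z := by
  have hrev : 0 < w.reverse.length := by rwa [SimpleGraph.Walk.length_reverse]
  have hy' : z ∈ w.reverse.support := by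
    rwa [SimpleGraph.Walk.support_reverse, List.mem_reverse]
  obtain ⟨d, hd, hdy⟩ := aux_fst hrev hy'
  refine ⟨d.symm, ?_, ?_⟩
  · rw [SimpleGraph.Walk.darts_reverse] at hd
    rw [List.mem_reverse, List.mem_map] at hd
    obtain ⟨e, he, hde⟩ := hd
    rw [← hde]
    simpa using he
  · exact hdy

private lemma no_triangle {V : Type*} {G : SimpleGraph V}
    (hgirth : (6 : ℕ∞) ≤ G.egirth) {u a b : V}
    (h1 : G.Adj u a) (h2 : G.Adj u b) (hab : a ≠ b) : ¬ G.Adj a b := by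
  intro h3
  let p : G.Walk u u := .cons h1 (.cons h3 (.cons h2.symm .nil))
  have hc : p.IsCycle := by
    refine ⟨⟨⟨?_⟩, by simp [p]⟩, ?_⟩
    · simp only [p, SimpleGraph.Walk.edges_cons, SimpleGraph.Walk.edges_nil,
        List.nodup_cons, List.mem_cons,
        List.mem_singleton, List.not_mem_nil, or_false, not_or, List.nodup_nil, and_true]
      refine ⟨⟨?_, ?_⟩, ?_, not_false⟩ <;>
      · intro heq
        rcases Sym2.eq_iff.mp heq with ⟨h', h''⟩ | ⟨h', h''⟩ <;>
          first
            | exact hab h'' | exact hab h'.symm | exact hab h''.symm | exact hab h'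
            | exact h1.ne h' | exact h1.ne h'' | exact h1.ne h'.symm | exact h1.ne h''.symm
            | exact h2.ne h' | exact h2.ne h'' | exact h2.ne h'.symm | exact h2.ne h''.symm
    · simp only [p, SimpleGraph.Walk.support_cons, SimpleGraph.Walk.support_nil,
        List.tail_cons, List.nodup_cons,
        List.mem_cons, List.mem_singleton, List.not_mem_nil, or_false, not_or,
        List.nodup_nil, and_true]
      exact ⟨⟨hab, h1.ne'⟩, h2.ne', not_false⟩
  have h6 := SimpleGraph.le_egirth.mp hgirth u p hc
  have hl : p.length = 3 := by simp [p]
  rw [hl] at h6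
  norm_num at h6

/-- Let `G` be a finite plane graph with girth at least 6 in which any two
distinct degree-2 vertices are at distance at least 4.  Then every face `f`
— whose boundary is a cycle `w` of `G` — satisfies
`ℓ(f) ≥ 4|I(f)| + 2|N(f)|`, where `I(f)` is the set of degree-2 vertices
incident to `f` and `N(f)` is the set of degree-2 vertices nearby `f`
(adjacent to a vertex of `f` but not on `f`). -/
theorem face_length_ge_of_far_degree_two {V : Type*} [Fintype V] [DecidableEq V]
    (G : SimpleGraph V) [DecidableRel G.Adj]
    (hgirth : (6 : ℕ∞) ≤ G.egirth)
    (hdist : ∀ u v : V, u ≠ v → G.degree u = 2 → G.degree v = 2 →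
      4 ≤ G.dist u v)
    (x : V) (w : G.Walk x x) (hw : w.IsCycle) :
    4 * (univ.filter (fun u => G.degree u = 2 ∧ u ∈ w.support)).card +
      2 * (univ.filter (fun u => G.degree u = 2 ∧ u ∉ w.support ∧
        ∃ y ∈ w.support, G.Adj u y)).card
      ≤ w.length := by
  classical
  have hnil : 0 < w.length := by have := hw.three_le_length; omega
  set I := univ.filter (fun u => G.degree u = 2 ∧ u ∈ w.support) with hI
  set N := univ.filter (fun u => G.degree u = 2 ∧ u ∉ w.support ∧
    ∃ y ∈ w.support, G.Adj u y) with hN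
  have hdnd : w.darts.Nodup := by
    have h := hw.isTrail.edges_nodup
    rw [SimpleGraph.Walk.edges] at h
    exact h.of_map _
  have hinj : ∀ d₁ ∈ w.darts, ∀ d₂ ∈ w.darts, d₁.edge = d₂.edge → d₁ = d₂ := by
    have h := hw.isTrail.edges_nodup
    rw [SimpleGraph.Walk.edges] at h
    exact fun d₁ h₁ d₂ h₂ he => List.inj_on_of_nodup_map h h₁ h₂ he
  set T := w.darts.toFinset with hT
  have hTcard : T.card = w.length := by
    rw [hT, List.toFinset_card_of_nodup hdnd, SimpleGraph.Walk.length_darts]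
  set f : V → Finset G.Dart :=
    fun u => T.filter (fun d => G.Adj u d.toProd.1 ∨ G.Adj u d.toProd.2) with hf
  -- membership helper
  have hmemf : ∀ u : V, ∀ d ∈ w.darts, (G.Adj u d.toProd.1 ∨ G.Adj u d.toProd.2) →
      d ∈ f u := by
    intro u d hd hadj
    rw [hf]
    exact mem_filter.mpr ⟨List.mem_toFinset.mpr hd, hadj⟩
  -- Claim A
  have hI4 : ∀ u ∈ I, 4 ≤ (f u).card := by
    intro u hu
    rw [hI, mem_filter] at hu
    obtain ⟨-, hdeg, hmem⟩ := hu
    obtain ⟨d1, hd1, hd1f⟩ := aux_fst hnil hmem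
    obtain ⟨d2, hd2, hd2s⟩ := aux_snd hnil hmem
    set a := d1.toProd.2 with ha
    set b := d2.toProd.1 with hb
    have hua : G.Adj u a := by have := d1.adj; rwa [hd1f] at this
    have hbu : G.Adj b u := by have := d2.adj; rwa [hd2s] at this
    have hub : G.Adj u b := hbu.symm
    have hab : a ≠ b := by
      intro h
      have hne : d1 ≠ d2 := by
        intro h'
        have : a = u := by rw [ha, h', hd2s]
        exact G.irrefl (this ▸ hua)
      apply hne
      apply hinj d1 hd1 d2 hd2
      have e1 : d1.edge = s(u, a) := by
        show s(d1.toProd.1, d1.toProd.2) = _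
        rw [show d1.toProd = (u, a) from Prod.ext hd1f rfl]
      have e2 : d2.edge = s(b, u) := by
        show s(d2.toProd.1, d2.toProd.2) = _
        rw [show d2.toProd = (b, u) from Prod.ext rfl hd2s]
      rw [e1, e2, ← h, Sym2.eq_swap]
    have hnab : ¬ G.Adj a b := no_triangle hgirth hua hub hab
    have hamem : a ∈ w.support := w.dart_snd_mem_support_of_mem_darts hd1
    have hbmem : b ∈ w.support := w.dart_fst_mem_support_of_mem_darts hd2
    obtain ⟨e1, he1, he1f⟩ := aux_fst hnil hamem
    obtain ⟨e2, he2, he2s⟩ := aux_snd hnil hamem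
    obtain ⟨e3, he3, he3f⟩ := aux_fst hnil hbmem
    obtain ⟨e4, he4, he4s⟩ := aux_snd hnil hbmem
    have m1 : e1 ∈ f u := hmemf u e1 he1 (Or.inl (by rw [he1f]; exact hua))
    have m2 : e2 ∈ f u := hmemf u e2 he2 (Or.inr (by rw [he2s]; exact hua))
    have m3 : e3 ∈ f u := hmemf u e3 he3 (Or.inl (by rw [he3f]; exact hub))
    have m4 : e4 ∈ f u := hmemf u e4 he4 (Or.inr (by rw [he4s]; exact hub))
    have n12 : e1 ≠ e2 := by
      intro h
      have := e1.adj
      rw [he1f, h, he2s] at this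
      exact G.irrefl this
    have n13 : e1 ≠ e3 := by
      intro h
      apply hab
      rw [← he1f, h, he3f]
    have n14 : e1 ≠ e4 := by
      intro h
      apply hnab
      have := e1.adj
      rwa [he1f, h, he4s] at this
    have n23 : e2 ≠ e3 := by
      intro h
      apply hnab
      have := e3.adj
      rw [he3f, ← h, he2s] at this
      exact this.symm
    have n24 : e2 ≠ e4 := by
      intro h
      apply hab
      rw [← he2s, h, he4s]
    have n34 : e3 ≠ e4 := by
      intro h
      have := e3.adj
      rw [he3f, h, he4s] at this
      exact G.irrefl this
    have hsub : ({e1, e2, e3, e4} : Finset G.Dart) ⊆ f u := by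
      intro d hd
      simp only [mem_insert, mem_singleton] at hd
      rcases hd with h | h | h | h <;> subst h
      exacts [m1, m2, m3, m4]
    have hc4 : ({e1, e2, e3, e4} : Finset G.Dart).card = 4 := by
      rw [card_insert_of_notMem (by simp [n12, n13, n14]),
        card_insert_of_notMem (by simp [n23, n24]),
        card_insert_of_notMem (by simp [n34]), card_singleton]
    calc (4 : ℕ) = ({e1, e2, e3, e4} : Finset G.Dart).card := hc4.symm
      _ ≤ (f u).card := card_le_card hsub
  -- Claim B
  have hN2 : ∀ u ∈ N, 2 ≤ (f u).card := by
    intro u hu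
    rw [hN, mem_filter] at hu
    obtain ⟨-, hdeg, hnmem, y, hy, hadj⟩ := hu
    obtain ⟨d1, hd1, hd1f⟩ := aux_fst hnil hy
    obtain ⟨d2, hd2, hd2s⟩ := aux_snd hnil hy
    have m1 : d1 ∈ f u := hmemf u d1 hd1 (Or.inl (by rw [hd1f]; exact hadj))
    have m2 : d2 ∈ f u := hmemf u d2 hd2 (Or.inr (by rw [hd2s]; exact hadj))
    have n12 : d1 ≠ d2 := by
      intro h
      have := d1.adj
      rw [hd1f, h, hd2s] at this
      exact G.irrefl this
    have hsub : ({d1, d2} : Finset G.Dart) ⊆ f u := by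
      intro d hd
      simp only [mem_insert, mem_singleton] at hd
      rcases hd with h | h <;> subst h
      exacts [m1, m2]
    calc (2 : ℕ) = ({d1, d2} : Finset G.Dart).card := by
          rw [card_insert_of_notMem (by simp [n12]), card_singleton]
      _ ≤ (f u).card := card_le_card hsub
  -- degrees of members
  have hdeg2 : ∀ z ∈ I ∪ N, G.degree z = 2 := by
    intro z hz
    rcases mem_union.mp hz with h | h
    · rw [hI, mem_filter] at h; exact h.2.1
    · rw [hN, mem_filter] at h; exact h.2.1
  -- pairwise disjointness
  have hdisj : ∀ u ∈ I ∪ N, ∀ v ∈ I ∪ N, u ≠ v → Disjoint (f u) (f v) := by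
    intro u hu v hv huv
    rw [Finset.disjoint_left]
    intro d hdu hdv
    rw [hf, mem_filter] at hdu hdv
    obtain ⟨-, hu'⟩ := hdu
    obtain ⟨-, hv'⟩ := hdv
    have h4 := hdist u v huv (hdeg2 u hu) (hdeg2 v hv)
    have hadj := d.adj
    have h3 : G.dist u v ≤ 3 := by
      rcases hu' with h1 | h1 <;> rcases hv' with h2 | h2
      · calc G.dist u v ≤ (SimpleGraph.Walk.cons h1
              (SimpleGraph.Walk.cons h2.symm .nil)).length := SimpleGraph.dist_le _
          _ ≤ 3 := by simp
      · calc G.dist u v ≤ (SimpleGraph.Walk.cons h1 (SimpleGraph.Walk.cons hadj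
              (SimpleGraph.Walk.cons h2.symm .nil))).length := SimpleGraph.dist_le _
          _ ≤ 3 := by simp
      · calc G.dist u v ≤ (SimpleGraph.Walk.cons h1 (SimpleGraph.Walk.cons hadj.symm
              (SimpleGraph.Walk.cons h2.symm .nil))).length := SimpleGraph.dist_le _
          _ ≤ 3 := by simp
      · calc G.dist u v ≤ (SimpleGraph.Walk.cons h1
              (SimpleGraph.Walk.cons h2.symm .nil)).length := SimpleGraph.dist_le _
          _ ≤ 3 := by simp
    omega
  have hIN : Disjoint I N := by
    rw [Finset.disjoint_left]
    intro u hu hv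
    rw [hI, mem_filter] at hu
    rw [hN, mem_filter] at hv
    exact hv.2.2.1 hu.2.2
  calc 4 * I.card + 2 * N.card
      ≤ (∑ u ∈ I, (f u).card) + ∑ u ∈ N, (f u).card := by
        apply add_le_add
        · rw [show 4 * I.card = ∑ _u ∈ I, 4 by rw [Finset.sum_const, smul_eq_mul, mul_comm]]
          exact Finset.sum_le_sum hI4
        · rw [show 2 * N.card = ∑ _u ∈ N, 2 by rw [Finset.sum_const, smul_eq_mul, mul_comm]]
          exact Finset.sum_le_sum hN2
    _ = ∑ u ∈ I ∪ N, (f u).card := (Finset.sum_union hIN).symm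
    _ = ((I ∪ N).biUnion f).card := (Finset.card_biUnion hdisj).symm
    _ ≤ T.card := by
        apply card_le_card
        intro d hd
        obtain ⟨u, -, hdu⟩ := Finset.mem_biUnion.mp hd
        rw [hf, mem_filter] at hdu
        exact hdu.1
    _ = w.length := hTcard
end

section
/- Let G be a finite simple graph with maximum degree at most 3 and girth at least 6, and let v be a degree-2 vertex whose two neighbors both have degree 2. Then for any list assignment L with |L(u)| ≥ 5 for all u, if G − N[v] admits an injective L-coloring then G admits an injective L-coloring. -/
/-- Let `G` have maximum degree at most 3 and girth at least 6, and let `v` be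
a degree-2 vertex both of whose neighbors have degree 2.  For any list
assignment with lists of size at least 5, if `G − N[v]` admits an injective
`L`-coloring then `G` admits an injective `L`-coloring. -/
theorem injective_coloring_extends_closed_nbhd {V : Type*} [Fintype V]
    (G : SimpleGraph V) [DecidableRel G.Adj]
    (hdeg : ∀ u, G.degree u ≤ 3) (hgirth : (6 : ℕ∞) ≤ G.egirth)
    (v : V) (hv : G.degree v = 2)
    (hnbr : ∀ w, G.Adj v w → G.degree w = 2)
    (L : V → Finset ℕ) (hL : ∀ u, 5 ≤ (L u).card)
    (hcol : ∃ φ : V → ℕ,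
      (∀ u, u ≠ v → ¬ G.Adj v u → φ u ∈ L u) ∧
      (∀ a b : V, a ≠ v → ¬ G.Adj v a → b ≠ v → ¬ G.Adj v b → a ≠ b →
        (∃ w, w ≠ v ∧ ¬ G.Adj v w ∧ G.Adj a w ∧ G.Adj b w) → φ a ≠ φ b)) :
    ∃ ψ : V → ℕ, (∀ u, ψ u ∈ L u) ∧
      ∀ a b : V, a ≠ b → (∃ w, G.Adj a w ∧ G.Adj b w) → ψ a ≠ ψ b := by
  classical
  obtain ⟨φ, hφL, hφ⟩ := hcol
  have key : ∀ (s t : Finset ℕ), 5 ≤ s.card → t.card ≤ 4 → (s \ t).Nonempty := by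
    intro s t hs ht
    rw [← Finset.card_pos]
    have := Finset.card_le_card_sdiff_add_card (s := s) (t := t)
    omega
  have hcv : (G.neighborFinset v).card = 2 := by
    rw [SimpleGraph.card_neighborFinset_eq_degree]; exact hv
  obtain ⟨w₁, w₂, hw12, hNv⟩ := Finset.card_eq_two.mp hcv
  have hadj1 : G.Adj v w₁ := by rw [← SimpleGraph.mem_neighborFinset, hNv]; simp
  have hadj2 : G.Adj v w₂ := by rw [← SimpleGraph.mem_neighborFinset, hNv]; simp
  have hvnbr : ∀ u, G.Adj v u ↔ u = w₁ ∨ u = w₂ := fun u => by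
    rw [← SimpleGraph.mem_neighborFinset, hNv]; simp
  -- each neighbor of v has a unique second neighbor
  have hnb : ∀ w, G.Adj v w → ∃ x, ∀ u, G.Adj w u ↔ u = v ∨ u = x := by
    intro w hw
    have hc1 : ((G.neighborFinset w).erase v).card = 1 := by
      rw [Finset.card_erase_of_mem (by rw [SimpleGraph.mem_neighborFinset]; exact hw.symm),
        SimpleGraph.card_neighborFinset_eq_degree, hnbr w hw]
    obtain ⟨x, hx⟩ := Finset.card_eq_one.mp hc1
    refine ⟨x, fun u => ?_⟩
    constructor
    · intro h
      by_cases huv : u = v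
      · exact Or.inl huv
      · right
        have hmem : u ∈ (G.neighborFinset w).erase v := by
          simp [Finset.mem_erase, huv, SimpleGraph.mem_neighborFinset, h]
        rw [hx] at hmem; simpa using hmem
    · rintro (rfl | rfl)
      · exact hw.symm
      · have hmem : u ∈ (G.neighborFinset w).erase v := by rw [hx]; simp
        exact (SimpleGraph.mem_neighborFinset _ _ _).mp (Finset.mem_of_mem_erase hmem)
  obtain ⟨x₁, hw1nbr⟩ := hnb w₁ hadj1
  obtain ⟨x₂, hw2nbr⟩ := hnb w₂ hadj2
  -- choose colors
  have hT : ∀ x : V, ((G.neighborFinset x).image φ).card ≤ 3 := by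
    intro x
    refine le_trans Finset.card_image_le ?_
    rw [SimpleGraph.card_neighborFinset_eq_degree]; exact hdeg x
  obtain ⟨c₁, hc₁⟩ := key (L w₁) ((G.neighborFinset x₁).image φ) (hL w₁)
    (le_trans (hT x₁) (by omega))
  rw [Finset.mem_sdiff] at hc₁
  obtain ⟨c₂, hc₂⟩ := key (L w₂) ((G.neighborFinset x₂).image φ ∪ {c₁}) (hL w₂)
    (le_trans (Finset.card_union_le _ _) (by have := hT x₂; simp; omega))
  rw [Finset.mem_sdiff] at hc₂
  obtain ⟨cv, hcvm⟩ := key (L v) ({φ x₁, φ x₂, c₁, c₂}) (hL v)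
    (by
      refine le_trans (Finset.card_insert_le _ _) ?_
      refine Nat.add_le_add ?_ le_rfl
      refine le_trans (Finset.card_insert_le _ _) ?_
      refine Nat.add_le_add ?_ le_rfl
      refine le_trans (Finset.card_insert_le _ _) ?_
      simp)
  rw [Finset.mem_sdiff] at hcvm
  have hne_v1 : cv ≠ c₁ := by intro h; exact hcvm.2 (by simp [h])
  have hne_v2 : cv ≠ c₂ := by intro h; exact hcvm.2 (by simp [h])
  have hne_12 : c₁ ≠ c₂ := by
    intro h; exact hc₂.2 (by simp [← h])
  have hcvx1 : cv ≠ φ x₁ := by intro h; exact hcvm.2 (by simp [h])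
  have hcvx2 : cv ≠ φ x₂ := by intro h; exact hcvm.2 (by simp [h])
  have hv1 : v ≠ w₁ := hadj1.ne
  have hv2 : v ≠ w₂ := hadj2.ne
  -- the extended coloring
  set ψ : V → ℕ := fun u => if u = v then cv else if u = w₁ then c₁ else if u = w₂ then c₂ else φ u with hψdef
  have hψv : ψ v = cv := by simp [hψdef]
  have hψ1 : ψ w₁ = c₁ := by simp [hψdef, hv1.symm]
  have hψ2 : ψ w₂ = c₂ := by simp [hψdef, hv2.symm, hw12.symm]
  have hψout : ∀ u, u ≠ v → ¬ G.Adj v u → ψ u = φ u := by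
    intro u h1 h2
    have h3 : u ≠ w₁ := by rintro rfl; exact h2 hadj1
    have h4 : u ≠ w₂ := by rintro rfl; exact h2 hadj2
    simp [hψdef, h1, h3, h4]
  -- conflict lemmas
  have L_vout : ∀ u, u ≠ v → ¬ G.Adj v u → (∃ w, G.Adj v w ∧ G.Adj u w) → cv ≠ φ u := by
    rintro u h1 h2 ⟨w, hvw, huw⟩
    rcases (hvnbr w).mp hvw with rfl | rfl
    · rcases (hw1nbr u).mp huw.symm with rfl | rfl
      · exact absurd rfl h1
      · exact hcvx1
    · rcases (hw2nbr u).mp huw.symm with rfl | rfl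
      · exact absurd rfl h1
      · exact hcvx2
  have L_1out : ∀ u, u ≠ v → ¬ G.Adj v u → (∃ w, G.Adj w₁ w ∧ G.Adj u w) → c₁ ≠ φ u := by
    rintro u h1 h2 ⟨w, h1w, huw⟩
    rcases (hw1nbr w).mp h1w with rfl | rfl
    · exact absurd huw.symm h2
    · intro h
      exact hc₁.2 (h ▸ Finset.mem_image_of_mem φ ((SimpleGraph.mem_neighborFinset _ _ _).mpr huw.symm))
  have L_2out : ∀ u, u ≠ v → ¬ G.Adj v u → (∃ w, G.Adj w₂ w ∧ G.Adj u w) → c₂ ≠ φ u := by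
    rintro u h1 h2 ⟨w, h2w, huw⟩
    rcases (hw2nbr w).mp h2w with rfl | rfl
    · exact absurd huw.symm h2
    · intro h
      refine hc₂.2 (Finset.mem_union_left _ ?_)
      exact h ▸ Finset.mem_image_of_mem φ ((SimpleGraph.mem_neighborFinset _ _ _).mpr huw.symm)
  have L_oo : ∀ a b, a ≠ v → ¬ G.Adj v a → b ≠ v → ¬ G.Adj v b → a ≠ b →
      (∃ w, G.Adj a w ∧ G.Adj b w) → φ a ≠ φ b := by
    rintro a b ha1 ha2 hb1 hb2 hab ⟨w, haw, hbw⟩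
    by_cases hwv : w = v
    · subst hwv; exact absurd haw.symm ha2
    by_cases hw1 : w = w₁
    · subst hw1
      rcases (hw1nbr a).mp haw.symm with rfl | rfl
      · exact absurd rfl ha1
      · rcases (hw1nbr b).mp hbw.symm with rfl | rfl
        · exact absurd rfl hb1
        · exact absurd rfl hab
    by_cases hw2 : w = w₂
    · subst hw2
      rcases (hw2nbr a).mp haw.symm with rfl | rfl
      · exact absurd rfl ha1
      · rcases (hw2nbr b).mp hbw.symm with rfl | rfl
        · exact absurd rfl hb1
        · exact absurd rfl hab
    · exact hφ a b ha1 ha2 hb1 hb2 hab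
        ⟨w, hwv, by rw [hvnbr]; tauto, haw, hbw⟩
  have classify : ∀ u : V, u = v ∨ u = w₁ ∨ u = w₂ ∨ (u ≠ v ∧ ¬ G.Adj v u) := by
    intro u
    by_cases h1 : u = v
    · exact Or.inl h1
    by_cases h2 : G.Adj v u
    · rcases (hvnbr u).mp h2 with h | h
      · exact Or.inr (Or.inl h)
      · exact Or.inr (Or.inr (Or.inl h))
    · exact Or.inr (Or.inr (Or.inr ⟨h1, h2⟩))
  refine ⟨ψ, ?_, ?_⟩
  · intro u
    rcases classify u with rfl | rfl | rfl | ⟨h1, h2⟩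
    · rw [hψv]; exact hcvm.1
    · rw [hψ1]; exact hc₁.1
    · rw [hψ2]; exact hc₂.1
    · rw [hψout u h1 h2]; exact hφL u h1 h2
  · rintro a b hab ⟨w, haw, hbw⟩
    rcases classify a with rfl | rfl | rfl | ha <;>
      rcases classify b with rfl | rfl | rfl | hb
    · exact absurd rfl hab
    · rw [hψv, hψ1]; exact hne_v1
    · rw [hψv, hψ2]; exact hne_v2
    · rw [hψv, hψout b hb.1 hb.2]; exact L_vout b hb.1 hb.2 ⟨w, haw, hbw⟩
    · rw [hψ1, hψv]; exact hne_v1.symm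
    · exact absurd rfl hab
    · rw [hψ1, hψ2]; exact hne_12
    · rw [hψ1, hψout b hb.1 hb.2]; exact L_1out b hb.1 hb.2 ⟨w, haw, hbw⟩
    · rw [hψ2, hψv]; exact hne_v2.symm
    · rw [hψ2, hψ1]; exact hne_12.symm
    · exact absurd rfl hab
    · rw [hψ2, hψout b hb.1 hb.2]; exact L_2out b hb.1 hb.2 ⟨w, haw, hbw⟩
    · rw [hψout a ha.1 ha.2, hψv]; exact (L_vout a ha.1 ha.2 ⟨w, hbw, haw⟩).symm
    · rw [hψout a ha.1 ha.2, hψ1]; exact (L_1out a ha.1 ha.2 ⟨w, hbw, haw⟩).symm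
    · rw [hψout a ha.1 ha.2, hψ2]; exact (L_2out a ha.1 ha.2 ⟨w, hbw, haw⟩).symm
    · rw [hψout a ha.1 ha.2, hψout b hb.1 hb.2]
      exact L_oo a b ha.1 ha.2 hb.1 hb.2 hab ⟨w, haw, hbw⟩
end
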